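/- If square matrices A and B over Z are shift equivalent over Z (there exist matrices R₀, S over Z and a positive integer ℓ with A^ℓ = R₀S, B^ℓ = SR₀, AR₀ = R₀B, SA = BS), then det(I - t·A) = det(I - t·B) as polynomials in Z[t]. -/

import Mathlib

open Polynomial Matrix

noncomputable section AuxShiftEquiv

namespace AuxShiftEquiv

local notation "S" => PowerSeries ℚ

variable {k : ℕ}

/-- reversed characteristic polynomial over ℚ -/
def pp (M : Matrix (Fin k) (Fin k) ℚ) : Polynomial ℚ :=
  (1 - (X : Polynomial ℚ) • M.map C).det

/-- generating power series of traces of powers -/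
def trS (M : Matrix (Fin k) (Fin k) ℚ) : S :=
  PowerSeries.mk fun N => Matrix.trace (M ^ (N + 1))

/-- M with power series entries -/
def MS (M : Matrix (Fin k) (Fin k) ℚ) : Matrix (Fin k) (Fin k) S :=
  M.map (PowerSeries.C (R := ℚ))

/-- the inverse of `1 - X • M` over power series -/
def Uinv (M : Matrix (Fin k) (Fin k) ℚ) : Matrix (Fin k) (Fin k) S :=
  Matrix.of fun i j => PowerSeries.mk fun N => (M ^ N) i j

lemma W_mul_U (M : Matrix (Fin k) (Fin k) ℚ) :
    (1 - (PowerSeries.X : S) • MS M) * Uinv M = 1 := by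
  ext i j d
  rw [Matrix.sub_mul, Matrix.one_mul, Matrix.smul_mul, Matrix.sub_apply, Matrix.smul_apply,
    smul_eq_mul, map_sub]
  cases d with
  | zero =>
      rw [PowerSeries.coeff_zero_X_mul]
      simp [Uinv, Matrix.one_apply, Matrix.one_apply (i := i) (j := j)]
  | succ d =>
      rw [PowerSeries.coeff_succ_X_mul]
      have h1 : (PowerSeries.coeff (R := ℚ) (d+1)) (Uinv M i j) = (M ^ (d+1)) i j := by
        simp [Uinv]
      have h2 : (PowerSeries.coeff (R := ℚ) d) ((MS M * Uinv M) i j) = (M * M ^ d) i j := by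
        rw [Matrix.mul_apply, map_sum, Matrix.mul_apply]
        refine Finset.sum_congr rfl fun x _ => ?_
        simp [MS, Uinv, PowerSeries.coeff_C_mul]
      rw [h1, h2, ← pow_succ']
      simp only [Matrix.one_apply, sub_self]
      split <;> simp [PowerSeries.coeff_one]

lemma det_W (M : Matrix (Fin k) (Fin k) ℚ) :
    (1 - (PowerSeries.X : S) • MS M).det = ((pp M : Polynomial ℚ) : S) := by
  rw [pp, ← coeToPowerSeries.ringHom_apply, RingHom.map_det]
  congr 1
  rw [RingHom.mapMatrix_apply]
  ext i j
  simp only [MS, Matrix.map_apply, Matrix.sub_apply, Matrix.smul_apply, Matrix.one_apply,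
    smul_eq_mul, map_sub, _root_.map_mul, apply_ite coeToPowerSeries.ringHom, _root_.map_one, _root_.map_zero,
    coeToPowerSeries.ringHom_apply, Polynomial.coe_X, Polynomial.coe_C, Polynomial.coe_one]

lemma trace_MS_U (M : Matrix (Fin k) (Fin k) ℚ) :
    Matrix.trace (MS M * Uinv M) = trS M := by
  refine PowerSeries.ext fun d => ?_
  rw [Matrix.trace, trS, PowerSeries.coeff_mk, map_sum]
  have : Matrix.trace (M ^ (d+1)) = Matrix.trace (M * M ^ d) := by rw [← pow_succ']
  rw [this, Matrix.trace]
  refine Finset.sum_congr rfl fun i _ => ?_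
  rw [Matrix.diag_apply, Matrix.diag_apply, Matrix.mul_apply, Matrix.mul_apply, map_sum]
  refine Finset.sum_congr rfl fun x _ => ?_
  simp [MS, Uinv, PowerSeries.coeff_C_mul]

lemma coeff_zero_pp (M : Matrix (Fin k) (Fin k) ℚ) : (pp M).coeff 0 = 1 := by
  have h : (1 : Matrix (Fin k) (Fin k) (Polynomial ℚ)) - (X : Polynomial ℚ) • M.map C =
      (1 : Matrix (Fin k) (Fin k) (Polynomial ℚ)) + (X : Polynomial ℚ) • (-M).map C := by
    ext i j
    simp [Matrix.map_apply, sub_eq_add_neg]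
  rw [pp, h, Polynomial.coeff_zero_eq_eval_zero, eval_det_add_X_smul, det_one, eval_one]

/-- Jacobi-type identity: the coercion of `derivative (pp M)` to power series equals
`- pp M * trS M`. -/
lemma coe_derivative_pp (M : Matrix (Fin k) (Fin k) ℚ) :
    ((derivative (pp M) : Polynomial ℚ) : S) = -(((pp M : Polynomial ℚ) : S) * trS M) := by
  classical
  have hcoe : ((derivative (pp M) : Polynomial ℚ) : S) =
      Polynomial.eval PowerSeries.X ((derivative (pp M)).map (PowerSeries.C (R := ℚ))) := by
    rw [← Polynomial.eval₂_C_X_eq_coe, Polynomial.eval₂_eq_eval_map]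
  set τ : S := PowerSeries.X with hτ
  set K : Matrix (Fin k) (Fin k) S := 1 - τ • MS M with hK
  set V : Matrix (Fin k) (Fin k) S := Uinv M * MS M with hV
  have hKV : K * V = MS M := by
    rw [hV, ← Matrix.mul_assoc, W_mul_U, Matrix.one_mul]
  -- the polynomial pp M mapped to S coefficients
  have hPS : (pp M).map (PowerSeries.C (R := ℚ)) =
      (1 - (X : Polynomial S) • (MS M).map C).det := by
    rw [pp, ← Polynomial.coe_mapRingHom, RingHom.map_det]
    congr 1
    rw [RingHom.mapMatrix_apply]
    ext i j
    simp only [MS, Matrix.map_apply, Matrix.sub_apply, Matrix.smul_apply, Matrix.one_apply,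
      smul_eq_mul, coe_mapRingHom, Polynomial.map_sub, Polynomial.map_mul, Polynomial.map_X,
      Polynomial.map_C, apply_ite (Polynomial.map (PowerSeries.C (R := ℚ))), Polynomial.map_one,
      Polynomial.map_zero]
  -- taylor expansion
  have htay : Polynomial.taylor τ ((pp M).map (PowerSeries.C (R := ℚ))) =
      C K.det * (1 + (X : Polynomial S) • (-V).map C).det := by
    rw [hPS, taylor_apply]
    have hcomp : ((1 - (X : Polynomial S) • (MS M).map C).det).comp (X + C τ) =
        (eval₂RingHom Polynomial.C (X + C τ)) (1 - (X : Polynomial S) • (MS M).map C).det := rfl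
    rw [hcomp, RingHom.map_det]
    have hmat : (eval₂RingHom Polynomial.C (X + C τ)).mapMatrix
          (1 - (X : Polynomial S) • (MS M).map C) =
        K.map C * (1 + (X : Polynomial S) • (-V).map C) := by
      have step1 : (eval₂RingHom Polynomial.C (X + C τ)).mapMatrix
            (1 - (X : Polynomial S) • (MS M).map C) =
          K.map C - (X : Polynomial S) • (MS M).map C := by
        rw [RingHom.mapMatrix_apply]
        refine Matrix.ext fun i j => ?_
        simp only [Matrix.map_apply, Matrix.sub_apply, Matrix.smul_apply, Matrix.one_apply,
          smul_eq_mul, coe_eval₂RingHom, hK]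
        by_cases h : i = j <;>
          simp [h, eval₂_sub, eval₂_mul, eval₂_X, eval₂_C, eval₂_one, eval₂_zero] <;> ring
      have step2 : K.map C * (1 + (X : Polynomial S) • (-V).map C) =
          K.map C - (X : Polynomial S) • (MS M).map C := by
        rw [Matrix.mul_add, Matrix.mul_one, Matrix.mul_smul]
        have hneg : ((-V).map (C : S →+* Polynomial S) : Matrix (Fin k) (Fin k) (Polynomial S)) =
            -(V.map C) := by
          ext i j; simp [Matrix.map_apply]
        rw [hneg, Matrix.mul_neg, ← Matrix.map_mul, hKV, smul_neg, sub_eq_add_neg]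
      rw [step1, step2]
    rw [hmat, Matrix.det_mul]
    have hdetC : (Polynomial.C : S →+* Polynomial S) K.det = (K.map (Polynomial.C : S →+* Polynomial S)).det := by
      rw [RingHom.map_det, RingHom.mapMatrix_apply]
    rw [← hdetC]
  -- put it together
  rw [hcoe, ← Polynomial.derivative_map, ← Polynomial.taylor_coeff_one, htay]
  rw [Polynomial.coeff_C_mul, Matrix.coeff_det_one_add_X_smul_one]
  rw [det_W]
  have : Matrix.trace (-V) = -trS M := by
    rw [Matrix.trace_neg, hV, Matrix.trace_mul_comm, trace_MS_U]
  rw [this, mul_neg]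

/-- degree argument: a Wronskian-type relation forces `g = 0`. -/
lemma eq_zero_of_wronskian (P Q g : Polynomial ℚ) (hP : P ≠ 0) (hQ : Q ≠ 0)
    (h : derivative P * Q - derivative Q * P = P * Q * g) : g = 0 := by
  by_contra hg
  have hPQg : P * Q * g ≠ 0 := mul_ne_zero (mul_ne_zero hP hQ) hg
  have hbound : ∀ R T : Polynomial ℚ,
      (derivative R * T).natDegree ≤ R.natDegree + T.natDegree - 1 ∧ 1 ≤ R.natDegree
      ∨ derivative R * T = 0 := by
    intro R T
    by_cases hR : derivative R = 0
    · right; rw [hR, zero_mul]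
    · left
      have hRd : 1 ≤ R.natDegree := by
        by_contra hc
        push_neg at hc
        exact hR (derivative_of_natDegree_zero (by omega))
      refine ⟨?_, hRd⟩
      calc (derivative R * T).natDegree ≤ (derivative R).natDegree + T.natDegree :=
            natDegree_mul_le
        _ ≤ (R.natDegree - 1) + T.natDegree := by
            exact Nat.add_le_add_right (natDegree_derivative_le R) _
        _ ≤ R.natDegree + T.natDegree - 1 := by omega
  have h0 : derivative P * Q - derivative Q * P ≠ 0 := by
    intro h0
    rw [h0] at h
    exact hPQg h.symm
  have hub : (derivative P * Q - derivative Q * P).natDegree ≤ P.natDegree + Q.natDegree - 1 ∧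
      1 ≤ P.natDegree + Q.natDegree := by
    have hmax := natDegree_sub_le (derivative P * Q) (derivative Q * P)
    rcases hbound P Q with ⟨hb1, hd1⟩ | hz1 <;> rcases hbound Q P with ⟨hb2, hd2⟩ | hz2
    · rw [Nat.add_comm Q.natDegree P.natDegree] at hb2
      exact ⟨hmax.trans (max_le (by omega) (by omega)), by omega⟩
    · rw [hz2, sub_zero]
      exact ⟨hb1, by omega⟩
    · rw [hz1, zero_sub, natDegree_neg]
      rw [Nat.add_comm Q.natDegree P.natDegree] at hb2
      exact ⟨hb2, by omega⟩
    · exfalso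
      rw [hz1, hz2, sub_zero] at h0
      exact h0 rfl
  have hdeg : (derivative P * Q - derivative Q * P).natDegree =
      P.natDegree + Q.natDegree + g.natDegree := by
    rw [h, natDegree_mul (mul_ne_zero hP hQ) hg, natDegree_mul hP hQ]
  omega

/-- Newton-type uniqueness: two polynomials with constant coefficient 1 whose logarithmic
derivatives agree are equal. -/
lemma poly_eq_of_newton (P Q : Polynomial ℚ) (T : PowerSeries ℚ)
    (hP0 : P.coeff 0 = 1) (hQ0 : Q.coeff 0 = 1)
    (hP : ((derivative P : Polynomial ℚ) : PowerSeries ℚ) = -(((P : Polynomial ℚ) : PowerSeries ℚ) * T))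
    (hQ : ((derivative Q : Polynomial ℚ) : PowerSeries ℚ) = -(((Q : Polynomial ℚ) : PowerSeries ℚ) * T)) :
    P = Q := by
  ext N
  induction N using Nat.strong_induction_on with
  | _ N ih =>
    match N with
    | 0 => rw [hP0, hQ0]
    | (d+1) =>
      have eP := congrArg (PowerSeries.coeff (R := ℚ) d) hP
      have eQ := congrArg (PowerSeries.coeff (R := ℚ) d) hQ
      rw [Polynomial.coeff_coe, Polynomial.coeff_derivative, map_neg, PowerSeries.coeff_mul]
        at eP eQ
      have hsum : ∀ p ∈ Finset.HasAntidiagonal.antidiagonal d,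
          (PowerSeries.coeff (R := ℚ) p.1) (P : PowerSeries ℚ) * (PowerSeries.coeff (R := ℚ) p.2) T =
          (PowerSeries.coeff (R := ℚ) p.1) (Q : PowerSeries ℚ) * (PowerSeries.coeff (R := ℚ) p.2) T := by
        intro p hp
        have hle : p.1 ≤ d := Finset.HasAntidiagonal.antidiagonal.fst_le hp
        rw [Polynomial.coeff_coe, Polynomial.coeff_coe, ih p.1 (by omega)]
      rw [Finset.sum_congr rfl hsum] at eP
      have hcancel : P.coeff (d+1) * ((d : ℚ) + 1) = Q.coeff (d+1) * ((d : ℚ) + 1) := by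
        rw [eP, eQ]
      exact mul_right_cancel₀ (by positivity) hcancel

/-- mapping the integer reversed characteristic polynomial to ℚ gives `pp`. -/
lemma map_det_int {n : ℕ} (A : Matrix (Fin n) (Fin n) ℤ) :
    Polynomial.map (Int.castRingHom ℚ) (1 - (X : Polynomial ℤ) • A.map Polynomial.C).det =
      pp (A.map (Int.castRingHom ℚ)) := by
  rw [pp, ← Polynomial.coe_mapRingHom, RingHom.map_det]
  congr 1
  rw [RingHom.mapMatrix_apply]
  refine Matrix.ext fun i j => ?_
  simp only [Matrix.map_apply, Matrix.sub_apply, Matrix.smul_apply, Matrix.one_apply,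
    smul_eq_mul, coe_mapRingHom, Polynomial.map_sub, Polynomial.map_mul, Polynomial.map_X,
    Polynomial.map_C, apply_ite (Polynomial.map (Int.castRingHom ℚ)), Polynomial.map_one,
    Polynomial.map_zero]

lemma trace_pow_map {n : ℕ} (A : Matrix (Fin n) (Fin n) ℤ) (N : ℕ) :
    Matrix.trace ((A.map (Int.castRingHom ℚ)) ^ N) = ((Matrix.trace (A ^ N) : ℤ) : ℚ) := by
  have hpow : (A.map (Int.castRingHom ℚ)) ^ N = (A ^ N).map (Int.castRingHom ℚ) := by
    rw [← RingHom.mapMatrix_apply, ← map_pow, RingHom.mapMatrix_apply]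
  rw [hpow, Matrix.trace, Matrix.trace, Int.cast_sum]
  refine Finset.sum_congr rfl fun i _ => ?_
  simp [Matrix.diag_apply, Matrix.map_apply]

end AuxShiftEquiv

section Main

open AuxShiftEquiv

/-- shift equivalent integer matrices have the same reversed
characteristic polynomial `det (I - t A)`. -/
theorem shiftEquiv_det_one_sub_tA (n m : ℕ)
    (A : Matrix (Fin n) (Fin n) ℤ) (B : Matrix (Fin m) (Fin m) ℤ)
    (hSE : ∃ (ℓ : ℕ) (R₀ : Matrix (Fin n) (Fin m) ℤ) (S : Matrix (Fin m) (Fin n) ℤ),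
      0 < ℓ ∧ A ^ ℓ = R₀ * S ∧ B ^ ℓ = S * R₀ ∧ A * R₀ = R₀ * B ∧ S * A = B * S) :
    (1 - (X : Polynomial ℤ) • A.map Polynomial.C).det =
      (1 - (X : Polynomial ℤ) • B.map Polynomial.C).det := by
  obtain ⟨ℓ, R₀, Sm, hl, h1, h2, h3, h4⟩ := hSE
  -- trace equality in high degrees, over ℤ
  have hS : ∀ c : ℕ, Sm * A ^ c = B ^ c * Sm := by
    intro c
    induction c with
    | zero => simp
    | succ c ihc =>
        rw [pow_succ, pow_succ, ← Matrix.mul_assoc, ihc, Matrix.mul_assoc, h4,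
          ← Matrix.mul_assoc]
  have htr : ∀ N : ℕ, ℓ ≤ N → Matrix.trace (A ^ N) = Matrix.trace (B ^ N) := by
    intro N hN
    obtain ⟨c, rfl⟩ : ∃ c, N = c + ℓ := ⟨N - ℓ, by omega⟩
    calc Matrix.trace (A ^ (c + ℓ)) = Matrix.trace (A ^ c * (R₀ * Sm)) := by
          rw [← h1, ← pow_add]
      _ = Matrix.trace ((A ^ c * R₀) * Sm) := by rw [Matrix.mul_assoc]
      _ = Matrix.trace (Sm * (A ^ c * R₀)) := (Matrix.trace_mul_comm _ _)
      _ = Matrix.trace ((Sm * A ^ c) * R₀) := by rw [Matrix.mul_assoc]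
      _ = Matrix.trace (B ^ c * (Sm * R₀)) := by rw [hS, Matrix.mul_assoc]
      _ = Matrix.trace (B ^ (c + ℓ)) := by rw [← h2, ← pow_add]
  -- move to ℚ
  set Aq := A.map (Int.castRingHom ℚ) with hAq
  set Bq := B.map (Int.castRingHom ℚ) with hBq
  have htrq : ∀ N : ℕ, ℓ ≤ N → Matrix.trace (Aq ^ N) = Matrix.trace (Bq ^ N) := by
    intro N hN
    rw [hAq, hBq, trace_pow_map, trace_pow_map, htr N hN]
  -- the difference of trace series is a polynomial g
  set g : Polynomial ℚ := ∑ N ∈ Finset.range ℓ,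
    Polynomial.C (Matrix.trace (Aq ^ (N+1)) - Matrix.trace (Bq ^ (N+1))) * X ^ N with hgdef
  have hgc : ∀ d : ℕ, g.coeff d =
      if d ∈ Finset.range ℓ then Matrix.trace (Aq ^ (d+1)) - Matrix.trace (Bq ^ (d+1)) else 0 := by
    intro d
    rw [hgdef, finset_sum_coeff]
    simp only [coeff_C_mul, coeff_X_pow, mul_ite, mul_one, mul_zero]
    rw [Finset.sum_ite_eq (Finset.range ℓ) d
      (fun N => Matrix.trace (Aq ^ (N+1)) - Matrix.trace (Bq ^ (N+1)))]
  have hg : ((g : Polynomial ℚ) : PowerSeries ℚ) = trS Aq - trS Bq := by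
    refine PowerSeries.ext fun d => ?_
    rw [Polynomial.coeff_coe, hgc d, map_sub, trS, trS, PowerSeries.coeff_mk,
      PowerSeries.coeff_mk]
    split
    · rfl
    · next hd =>
        rw [Finset.mem_range] at hd
        rw [htrq (d+1) (by omega)]
        ring
  set P := pp Aq with hPdef
  set Q := pp Bq with hQdef
  have hP0 : P.coeff 0 = 1 := coeff_zero_pp Aq
  have hQ0 : Q.coeff 0 = 1 := coeff_zero_pp Bq
  have hPne : P ≠ 0 := fun hz => by rw [hz, Polynomial.coeff_zero] at hP0; exact one_ne_zero hP0.symm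
  have hQne : Q ≠ 0 := fun hz => by rw [hz, Polynomial.coeff_zero] at hQ0; exact one_ne_zero hQ0.symm
  have hstarA := coe_derivative_pp Aq
  have hstarB := coe_derivative_pp Bq
  have hrel : derivative P * Q - derivative Q * P = P * Q * (-g) := by
    have hrel' : ((derivative P * Q - derivative Q * P : Polynomial ℚ) : PowerSeries ℚ) =
        ((P * Q * (-g) : Polynomial ℚ) : PowerSeries ℚ) := by
      push_cast
      rw [hstarA, hstarB, hg]
      ring
    exact Polynomial.coe_injective ℚ hrel'
  have hgz : (-g : Polynomial ℚ) = 0 := eq_zero_of_wronskian P Q (-g) hPne hQne hrel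
  have hT : trS Aq = trS Bq := by
    have hg0 : g = 0 := by
      have := neg_eq_zero.mp hgz
      exact this
    rw [hg0] at hg
    have : (0 : PowerSeries ℚ) = trS Aq - trS Bq := by
      simpa using hg
    exact (sub_eq_zero.mp this.symm)
  have hPQ : P = Q := by
    refine poly_eq_of_newton P Q (trS Aq) hP0 hQ0 hstarA ?_
    rw [hT]
    exact hstarB
  have hinj : Function.Injective (Polynomial.map (Int.castRingHom ℚ)) :=
    Polynomial.map_injective _ Int.cast_injective
  apply hinj
  rw [map_det_int A, map_det_int B]
  exact hPQ

end Main

end AuxShiftEquiv
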